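/- Every HyperQPTL_K formula (HyperQPTL extended with the epistemic knowledge operator K_{A,π}) can be translated into an equivalent HyperQPTL formula: specifically, an occurrence of K_{A,π}ψ can be replaced by an existentially quantified proposition u together with the constraint ∀r. ∀π'. ((r U (u ∧ r ∧ X G ¬r)) ∧ G (r → A_π = A_{π'}) → G (r ∧ X ¬r → ψ[π'/π])), and the resulting HyperQPTL formula is satisfied by exactly the same sets of traces as the original HyperQPTL_K formula. -/

import Mathlib

/-!
STATEMENT 9: Every HyperQPTL_K formula (HyperQPTL extended with the epistemic
knowledge operator K_{A,π}) can be translated into an equivalent HyperQPTL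
formula: the resulting HyperQPTL formula is satisfied by exactly the same
sets of traces as the original HyperQPTL_K formula (an occurrence of K_{A,π}ψ
can be replaced by an existentially quantified proposition u together with the
constraint ∀r. ∀π'. ((r U (u ∧ r ∧ X G ¬r)) ∧ G (r → A_π = A_{π'}) →
G (r ∧ X ¬r → ψ[π'/π]))).
-/

/-- A trace over the atomic propositions (drawn from `ℕ`). -/
abbrev Trace : Type := ℕ → Set ℕ

/-! ### HyperQPTL -/

/-- Quantifier-free HyperQPTL formulas: `a_π | q | ¬ψ | ψ ∧ ψ | X ψ | ψ U ψ`. -/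
inductive QF : Type
  | atom : ℕ → ℕ → QF
  | patom : ℕ → QF
  | not : QF → QF
  | and : QF → QF → QF
  | next : QF → QF
  | xuntil : QF → QF → QF

/-- Satisfaction of a quantifier-free HyperQPTL formula. -/
def QF.Sat (Pi : ℕ → Trace) (σ : ℕ → Set ℕ) : ℕ → QF → Prop
  | i, .atom a π => a ∈ Pi π i
  | i, .patom q => i ∈ σ q
  | i, .not ψ => ¬ QF.Sat Pi σ i ψ
  | i, .and ψ₁ ψ₂ => QF.Sat Pi σ i ψ₁ ∧ QF.Sat Pi σ i ψ₂
  | i, .next ψ => QF.Sat Pi σ (i + 1) ψ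
  | i, .xuntil ψ₁ ψ₂ =>
      ∃ k, i ≤ k ∧ QF.Sat Pi σ k ψ₂ ∧ ∀ j, i ≤ j → j < k → QF.Sat Pi σ j ψ₁

/-- Trace variables of a quantifier-free formula. -/
def QF.tvars : QF → Finset ℕ
  | .atom _ π => {π}
  | .patom _ => ∅
  | .not ψ => ψ.tvars
  | .and ψ₁ ψ₂ => ψ₁.tvars ∪ ψ₂.tvars
  | .next ψ => ψ.tvars
  | .xuntil ψ₁ ψ₂ => ψ₁.tvars ∪ ψ₂.tvars

/-- Propositional variables of a quantifier-free formula. -/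
def QF.pvars : QF → Finset ℕ
  | .atom _ _ => ∅
  | .patom q => {q}
  | .not ψ => ψ.pvars
  | .and ψ₁ ψ₂ => ψ₁.pvars ∪ ψ₂.pvars
  | .next ψ => ψ.pvars
  | .xuntil ψ₁ ψ₂ => ψ₁.pvars ∪ ψ₂.pvars

/-- HyperQPTL formulas. -/
inductive HyperQPTL : Type
  | qf : QF → HyperQPTL
  | ex : ℕ → HyperQPTL → HyperQPTL
  | all : ℕ → HyperQPTL → HyperQPTL
  | pex : ℕ → HyperQPTL → HyperQPTL
  | pall : ℕ → HyperQPTL → HyperQPTL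

/-- Satisfaction `T, Π, i ⊨ φ` of a HyperQPTL formula. -/
def HyperQPTL.Sat (T : Set Trace) :
    (ℕ → Trace) → (ℕ → Set ℕ) → ℕ → HyperQPTL → Prop
  | Pi, σ, i, .qf ψ => QF.Sat Pi σ i ψ
  | Pi, σ, i, .ex π φ => ∃ t ∈ T, HyperQPTL.Sat T (Function.update Pi π t) σ i φ
  | Pi, σ, i, .all π φ => ∀ t ∈ T, HyperQPTL.Sat T (Function.update Pi π t) σ i φ
  | Pi, σ, i, .pex q φ =>
      ∃ s : Set ℕ, HyperQPTL.Sat T Pi (Function.update σ q s) i φ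
  | Pi, σ, i, .pall q φ =>
      ∀ s : Set ℕ, HyperQPTL.Sat T Pi (Function.update σ q s) i φ

/-- Free trace variables. -/
def HyperQPTL.freeT : HyperQPTL → Finset ℕ
  | .qf ψ => ψ.tvars
  | .ex π φ => φ.freeT \ {π}
  | .all π φ => φ.freeT \ {π}
  | .pex _ φ => φ.freeT
  | .pall _ φ => φ.freeT

/-- Free propositional variables. -/
def HyperQPTL.freeP : HyperQPTL → Finset ℕ
  | .qf ψ => ψ.pvars
  | .ex _ φ => φ.freeP
  | .all _ φ => φ.freeP
  | .pex q φ => φ.freeP \ {q}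
  | .pall q φ => φ.freeP \ {q}

/-- A HyperQPTL sentence. -/
def HyperQPTL.Closed (φ : HyperQPTL) : Prop := φ.freeT = ∅ ∧ φ.freeP = ∅

/-- `T ⊨ φ` iff `T, ∅, 0 ⊨ φ`. -/
def TSat (T : Set Trace) (φ : HyperQPTL) : Prop :=
  HyperQPTL.Sat T (fun _ _ => (∅ : Set ℕ)) (fun _ => (∅ : Set ℕ)) 0 φ

/-! ### HyperQPTL_K -/

/-- Quantifier-free HyperQPTL_K formulas: HyperQPTL extended with the
knowledge operator `K_{A,π} ψ`. -/
inductive QFK : Type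
  | atom : ℕ → ℕ → QFK
  | patom : ℕ → QFK
  | not : QFK → QFK
  | and : QFK → QFK → QFK
  | next : QFK → QFK
  | xuntil : QFK → QFK → QFK
  | know : Finset ℕ → ℕ → QFK → QFK     -- `K_{A,π} ψ`

/-- Satisfaction of a quantifier-free HyperQPTL_K formula over a set of
traces `T`: `K_{A,π} ψ` holds at position `i` iff for all traces `t' ∈ T`
whose prefix up to `i` agrees with `Π(π)` on all propositions in `A`,
`ψ` holds with `π` remapped to `t'`. -/
def QFK.Sat (T : Set Trace) :
    (ℕ → Trace) → (ℕ → Set ℕ) → ℕ → QFK → Prop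
  | Pi, _, i, .atom a π => a ∈ Pi π i
  | _, σ, i, .patom q => i ∈ σ q
  | Pi, σ, i, .not ψ => ¬ QFK.Sat T Pi σ i ψ
  | Pi, σ, i, .and ψ₁ ψ₂ => QFK.Sat T Pi σ i ψ₁ ∧ QFK.Sat T Pi σ i ψ₂
  | Pi, σ, i, .next ψ => QFK.Sat T Pi σ (i + 1) ψ
  | Pi, σ, i, .xuntil ψ₁ ψ₂ =>
      ∃ k, i ≤ k ∧ QFK.Sat T Pi σ k ψ₂ ∧
        ∀ j, i ≤ j → j < k → QFK.Sat T Pi σ j ψ₁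
  | Pi, σ, i, .know A π ψ =>
      ∀ t' ∈ T, (∀ a ∈ A, ∀ j ≤ i, (a ∈ Pi π j ↔ a ∈ t' j)) →
        QFK.Sat T (Function.update Pi π t') σ i ψ

/-- Trace variables of a quantifier-free HyperQPTL_K formula. -/
def QFK.tvars : QFK → Finset ℕ
  | .atom _ π => {π}
  | .patom _ => ∅
  | .not ψ => ψ.tvars
  | .and ψ₁ ψ₂ => ψ₁.tvars ∪ ψ₂.tvars
  | .next ψ => ψ.tvars
  | .xuntil ψ₁ ψ₂ => ψ₁.tvars ∪ ψ₂.tvars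
  | .know _ π ψ => insert π ψ.tvars

/-- Propositional variables of a quantifier-free HyperQPTL_K formula. -/
def QFK.pvars : QFK → Finset ℕ
  | .atom _ _ => ∅
  | .patom q => {q}
  | .not ψ => ψ.pvars
  | .and ψ₁ ψ₂ => ψ₁.pvars ∪ ψ₂.pvars
  | .next ψ => ψ.pvars
  | .xuntil ψ₁ ψ₂ => ψ₁.pvars ∪ ψ₂.pvars
  | .know _ _ ψ => ψ.pvars

/-- HyperQPTL_K formulas. -/
inductive HyperQPTLK : Type
  | qf : QFK → HyperQPTLK
  | ex : ℕ → HyperQPTLK → HyperQPTLK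
  | all : ℕ → HyperQPTLK → HyperQPTLK
  | pex : ℕ → HyperQPTLK → HyperQPTLK
  | pall : ℕ → HyperQPTLK → HyperQPTLK

/-- Satisfaction `T, Π, i ⊨ φ` of a HyperQPTL_K formula. -/
def HyperQPTLK.Sat (T : Set Trace) :
    (ℕ → Trace) → (ℕ → Set ℕ) → ℕ → HyperQPTLK → Prop
  | Pi, σ, i, .qf ψ => QFK.Sat T Pi σ i ψ
  | Pi, σ, i, .ex π φ => ∃ t ∈ T, HyperQPTLK.Sat T (Function.update Pi π t) σ i φ
  | Pi, σ, i, .all π φ => ∀ t ∈ T, HyperQPTLK.Sat T (Function.update Pi π t) σ i φ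
  | Pi, σ, i, .pex q φ =>
      ∃ s : Set ℕ, HyperQPTLK.Sat T Pi (Function.update σ q s) i φ
  | Pi, σ, i, .pall q φ =>
      ∀ s : Set ℕ, HyperQPTLK.Sat T Pi (Function.update σ q s) i φ

/-- Free trace variables. -/
def HyperQPTLK.freeT : HyperQPTLK → Finset ℕ
  | .qf ψ => ψ.tvars
  | .ex π φ => φ.freeT \ {π}
  | .all π φ => φ.freeT \ {π}
  | .pex _ φ => φ.freeT
  | .pall _ φ => φ.freeT

/-- Free propositional variables. -/
def HyperQPTLK.freeP : HyperQPTLK → Finset ℕ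
  | .qf ψ => ψ.pvars
  | .ex _ φ => φ.freeP
  | .all _ φ => φ.freeP
  | .pex q φ => φ.freeP \ {q}
  | .pall q φ => φ.freeP \ {q}

/-- A HyperQPTL_K sentence. -/
def HyperQPTLK.Closed (φ : HyperQPTLK) : Prop := φ.freeT = ∅ ∧ φ.freeP = ∅

/-- `T ⊨ φ` iff `T, ∅, 0 ⊨ φ`. -/
def TSatK (T : Set Trace) (φ : HyperQPTLK) : Prop :=
  HyperQPTLK.Sat T (fun _ _ => (∅ : Set ℕ)) (fun _ => (∅ : Set ℕ)) 0 φ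


/-! ### Auxiliary machinery for the translation -/

namespace QFK

/-- Weight measuring nesting of `know` operators. -/
def weight : QFK → ℕ
  | .atom _ _ => 0
  | .patom _ => 0
  | .not ψ => ψ.weight
  | .and ψ₁ ψ₂ => ψ₁.weight + ψ₂.weight
  | .next ψ => ψ.weight
  | .xuntil ψ₁ ψ₂ => ψ₁.weight + ψ₂.weight
  | .know _ _ ψ => 1 + 3 * ψ.weight

/-- Rename trace variables. -/
def renameT (f : ℕ → ℕ) : QFK → QFK
  | .atom a π => .atom a (f π)
  | .patom q => .patom q
  | .not ψ => .not (ψ.renameT f)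
  | .and ψ₁ ψ₂ => .and (ψ₁.renameT f) (ψ₂.renameT f)
  | .next ψ => .next (ψ.renameT f)
  | .xuntil ψ₁ ψ₂ => .xuntil (ψ₁.renameT f) (ψ₂.renameT f)
  | .know A π ψ => .know A (f π) (ψ.renameT f)

/-- Erase `know` operators (used only on know-free formulas). -/
def eraseK : QFK → QF
  | .atom a π => .atom a π
  | .patom q => .patom q
  | .not ψ => .not ψ.eraseK
  | .and ψ₁ ψ₂ => .and ψ₁.eraseK ψ₂.eraseK
  | .next ψ => .next ψ.eraseK
  | .xuntil ψ₁ ψ₂ => .xuntil ψ₁.eraseK ψ₂.eraseK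
  | .know _ _ ψ => ψ.eraseK

/-- Replace the leftmost outermost `know` subformula by the proposition `u`,
returning the data of that subformula together with the modified formula. -/
def repl (u : ℕ) : QFK → Option ((Finset ℕ × ℕ × QFK) × QFK)
  | .atom _ _ => none
  | .patom _ => none
  | .not ψ => (repl u ψ).map (fun p => (p.1, .not p.2))
  | .and ψ₁ ψ₂ =>
      match repl u ψ₁ with
      | some p => some (p.1, .and p.2 ψ₂)
      | none => (repl u ψ₂).map (fun p => (p.1, .and ψ₁ p.2))
  | .next ψ => (repl u ψ).map (fun p => (p.1, .next p.2))
  | .xuntil ψ₁ ψ₂ =>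
      match repl u ψ₁ with
      | some p => some (p.1, .xuntil p.2 ψ₂)
      | none => (repl u ψ₂).map (fun p => (p.1, .xuntil ψ₁ p.2))
  | .know A π ψ => some ((A, π, ψ), .patom u)

/-- Derived operators. -/
def qimp (a b : QFK) : QFK := .not (.and a (.not b))
def qiff (a b : QFK) : QFK := .and (qimp a b) (qimp b a)
def qtt (u : ℕ) : QFK := qimp (.patom u) (.patom u)
def qG (u : ℕ) (χ : QFK) : QFK := .not (.xuntil (qtt u) (.not χ))
noncomputable def agreeF (A : Finset ℕ) (π π' u : ℕ) : QFK :=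
  A.toList.foldr (fun a acc => .and (qiff (.atom a π) (.atom a π')) acc) (qtt u)
def mark (u r : ℕ) (L : QFK) : QFK :=
  .xuntil (.patom r) (.and L (.and (.patom r) (.next (qG u (.not (.patom r))))))
def endr (r : ℕ) : QFK := .and (.patom r) (.next (.not (.patom r)))

end QFK


section SatLemmas

variable {T : Set Trace} {Pi : ℕ → Trace} {σ : ℕ → Set ℕ}

@[simp] lemma sat_atom {a π i : ℕ} : QFK.Sat T Pi σ i (.atom a π) ↔ a ∈ Pi π i := Iff.rfl
@[simp] lemma sat_patom {q i : ℕ} : QFK.Sat T Pi σ i (.patom q) ↔ i ∈ σ q := Iff.rfl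
@[simp] lemma sat_not {ψ : QFK} {i : ℕ} :
    QFK.Sat T Pi σ i (.not ψ) ↔ ¬ QFK.Sat T Pi σ i ψ := Iff.rfl
@[simp] lemma sat_and {ψ₁ ψ₂ : QFK} {i : ℕ} :
    QFK.Sat T Pi σ i (.and ψ₁ ψ₂) ↔ QFK.Sat T Pi σ i ψ₁ ∧ QFK.Sat T Pi σ i ψ₂ := Iff.rfl
@[simp] lemma sat_next {ψ : QFK} {i : ℕ} :
    QFK.Sat T Pi σ i (.next ψ) ↔ QFK.Sat T Pi σ (i+1) ψ := Iff.rfl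
@[simp] lemma sat_xuntil {ψ₁ ψ₂ : QFK} {i : ℕ} :
    QFK.Sat T Pi σ i (.xuntil ψ₁ ψ₂) ↔
      ∃ k, i ≤ k ∧ QFK.Sat T Pi σ k ψ₂ ∧
        ∀ j, i ≤ j → j < k → QFK.Sat T Pi σ j ψ₁ := Iff.rfl
lemma sat_know {A : Finset ℕ} {π : ℕ} {ψ : QFK} {i : ℕ} :
    QFK.Sat T Pi σ i (.know A π ψ) ↔
      ∀ t' ∈ T, (∀ a ∈ A, ∀ j ≤ i, (a ∈ Pi π j ↔ a ∈ t' j)) →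
        QFK.Sat T (Function.update Pi π t') σ i ψ := Iff.rfl

@[simp] lemma sat_qimp {a b : QFK} {i : ℕ} :
    QFK.Sat T Pi σ i (QFK.qimp a b) ↔ (QFK.Sat T Pi σ i a → QFK.Sat T Pi σ i b) := by
  simp only [QFK.qimp, sat_not, sat_and]; tauto

@[simp] lemma sat_qtt {u i : ℕ} : QFK.Sat T Pi σ i (QFK.qtt u) := by
  simp [QFK.qtt]

@[simp] lemma sat_qiff {a b : QFK} {i : ℕ} :
    QFK.Sat T Pi σ i (QFK.qiff a b) ↔ (QFK.Sat T Pi σ i a ↔ QFK.Sat T Pi σ i b) := by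
  simp only [QFK.qiff, sat_and, sat_qimp]; tauto

@[simp] lemma sat_qG {u : ℕ} {χ : QFK} {i : ℕ} :
    QFK.Sat T Pi σ i (QFK.qG u χ) ↔ ∀ k, i ≤ k → QFK.Sat T Pi σ k χ := by
  simp only [QFK.qG, sat_not, sat_xuntil]
  constructor
  · intro h k hk
    by_contra hc
    exact h ⟨k, hk, hc, fun j _ _ => sat_qtt (T := T) (Pi := Pi) (σ := σ)⟩
  · rintro h ⟨k, hk, hc, -⟩
    exact hc (h k hk)

@[simp] lemma sat_agreeF {A : Finset ℕ} {π π' u i : ℕ} :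
    QFK.Sat T Pi σ i (QFK.agreeF A π π' u) ↔
      ∀ a ∈ A, (a ∈ Pi π i ↔ a ∈ Pi π' i) := by
  unfold QFK.agreeF
  rw [show (∀ a ∈ A, (a ∈ Pi π i ↔ a ∈ Pi π' i)) ↔
        (∀ a ∈ A.toList, (a ∈ Pi π i ↔ a ∈ Pi π' i)) by simp]
  induction A.toList with
  | nil => simp
  | cons a l ih => simp [ih]

@[simp] lemma sat_endr {r i : ℕ} :
    QFK.Sat T Pi σ i (QFK.endr r) ↔ (i ∈ σ r ∧ (i+1) ∉ σ r) := by
  simp [QFK.endr]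

lemma sat_mark {u r : ℕ} {L : QFK} :
    QFK.Sat T Pi σ 0 (QFK.mark u r L) ↔
      ∃ k, σ r = Set.Iic k ∧ QFK.Sat T Pi σ k L := by
  simp only [QFK.mark, sat_xuntil, sat_and, sat_next, sat_qG, sat_not, sat_patom]
  constructor
  · rintro ⟨k, -, ⟨hL, hk, hafter⟩, hbefore⟩
    refine ⟨k, ?_, hL⟩
    ext j
    simp only [Set.mem_Iic]
    constructor
    · intro hj
      by_contra hjk
      push_neg at hjk
      exact (hafter j hjk) hj
    · intro hj
      rcases eq_or_lt_of_le hj with h | h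
      · exact h ▸ hk
      · exact hbefore j (Nat.zero_le _) h
  · rintro ⟨k, hR, hL⟩
    refine ⟨k, Nat.zero_le _, ⟨hL, ?_, ?_⟩, ?_⟩
    · simp [hR]
    · intro j hj; simp [hR]; omega
    · intro j _ hj; simp [hR]; omega

end SatLemmas

section Congr

variable {T : Set Trace}

/-- Satisfaction only depends on the variables occurring in the formula. -/
lemma sat_congr : ∀ (ψ : QFK) {Pi Pi' : ℕ → Trace} {σ σ' : ℕ → Set ℕ},
    (∀ v ∈ ψ.tvars, Pi v = Pi' v) → (∀ q ∈ ψ.pvars, σ q = σ' q) →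
    ∀ i, (QFK.Sat T Pi σ i ψ ↔ QFK.Sat T Pi' σ' i ψ)
  | .atom a π, Pi, Pi', σ, σ', hT, hP, i => by
      simp [QFK.tvars] at hT; simp [hT]
  | .patom q, Pi, Pi', σ, σ', hT, hP, i => by
      simp [QFK.pvars] at hP; simp [hP]
  | .not ψ, Pi, Pi', σ, σ', hT, hP, i => by
      simp only [sat_not]
      exact not_congr (sat_congr ψ hT hP i)
  | .and ψ₁ ψ₂, Pi, Pi', σ, σ', hT, hP, i => by
      simp only [QFK.tvars, QFK.pvars, Finset.mem_union] at hT hP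
      simp only [sat_and]
      exact and_congr (sat_congr ψ₁ (fun v hv => hT v (Or.inl hv)) (fun q hq => hP q (Or.inl hq)) i)
        (sat_congr ψ₂ (fun v hv => hT v (Or.inr hv)) (fun q hq => hP q (Or.inr hq)) i)
  | .next ψ, Pi, Pi', σ, σ', hT, hP, i => by
      simp only [sat_next]
      exact sat_congr ψ hT hP (i+1)
  | .xuntil ψ₁ ψ₂, Pi, Pi', σ, σ', hT, hP, i => by
      simp only [QFK.tvars, QFK.pvars, Finset.mem_union] at hT hP
      simp only [sat_xuntil]
      refine exists_congr fun k => and_congr_right fun _ => and_congr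
        (sat_congr ψ₂ (fun v hv => hT v (Or.inr hv)) (fun q hq => hP q (Or.inr hq)) k) ?_
      exact forall_congr' fun j => imp_congr_right fun _ => imp_congr_right fun _ =>
        sat_congr ψ₁ (fun v hv => hT v (Or.inl hv)) (fun q hq => hP q (Or.inl hq)) j
  | .know A π ψ, Pi, Pi', σ, σ', hT, hP, i => by
      simp only [QFK.tvars, Finset.mem_insert] at hT
      have hπ : Pi π = Pi' π := hT π (Or.inl rfl)
      simp only [sat_know, hπ]
      refine forall_congr' fun t' => imp_congr_right fun _ => imp_congr_right fun _ => ?_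
      refine sat_congr ψ (fun v hv => ?_) hP i
      by_cases hv' : v = π
      · subst hv'; simp
      · simp only [Function.update_of_ne hv']
        exact hT v (Or.inr hv)

/-- A formula without trace variables does not depend on `T`. -/
lemma sat_T_irrel : ∀ (ψ : QFK), ψ.tvars = ∅ → ∀ (T' : Set Trace) Pi σ i,
    (QFK.Sat T Pi σ i ψ ↔ QFK.Sat T' Pi σ i ψ)
  | .atom a π, h, T', Pi, σ, i => by simp [QFK.tvars] at h
  | .patom q, h, T', Pi, σ, i => Iff.rfl
  | .not ψ, h, T', Pi, σ, i => not_congr (sat_T_irrel ψ h T' Pi σ i)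
  | .and ψ₁ ψ₂, h, T', Pi, σ, i => by
      simp only [QFK.tvars, Finset.union_eq_empty] at h
      exact and_congr (sat_T_irrel ψ₁ h.1 T' Pi σ i) (sat_T_irrel ψ₂ h.2 T' Pi σ i)
  | .next ψ, h, T', Pi, σ, i => sat_T_irrel ψ h T' Pi σ (i+1)
  | .xuntil ψ₁ ψ₂, h, T', Pi, σ, i => by
      simp only [QFK.tvars, Finset.union_eq_empty] at h
      refine exists_congr fun k => and_congr_right fun _ => and_congr
        (sat_T_irrel ψ₂ h.2 T' Pi σ k) (forall_congr' fun j => imp_congr_right fun _ =>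
          imp_congr_right fun _ => sat_T_irrel ψ₁ h.1 T' Pi σ j)
  | .know A π ψ, h, T', Pi, σ, i => by
      simp [QFK.tvars] at h

end Congr

section Rename

variable {T : Set Trace}

lemma tvars_renameT (f : ℕ → ℕ) : ∀ ψ : QFK, (ψ.renameT f).tvars ⊆ ψ.tvars.image f
  | .atom a π => by simp [QFK.renameT, QFK.tvars]
  | .patom q => by simp [QFK.renameT, QFK.tvars]
  | .not ψ => tvars_renameT f ψ
  | .and ψ₁ ψ₂ => by
      simp only [QFK.renameT, QFK.tvars, Finset.image_union]
      exact Finset.union_subset_union (tvars_renameT f ψ₁) (tvars_renameT f ψ₂)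
  | .next ψ => tvars_renameT f ψ
  | .xuntil ψ₁ ψ₂ => by
      simp only [QFK.renameT, QFK.tvars, Finset.image_union]
      exact Finset.union_subset_union (tvars_renameT f ψ₁) (tvars_renameT f ψ₂)
  | .know A π ψ => by
      simp only [QFK.renameT, QFK.tvars, Finset.image_insert]
      exact Finset.insert_subset_insert _ (tvars_renameT f ψ)

lemma pvars_renameT (f : ℕ → ℕ) : ∀ ψ : QFK, (ψ.renameT f).pvars = ψ.pvars
  | .atom a π => rfl
  | .patom q => rfl
  | .not ψ => pvars_renameT f ψ
  | .and ψ₁ ψ₂ => by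
      simp only [QFK.renameT, QFK.pvars, pvars_renameT f ψ₁, pvars_renameT f ψ₂]
  | .next ψ => pvars_renameT f ψ
  | .xuntil ψ₁ ψ₂ => by
      simp only [QFK.renameT, QFK.pvars, pvars_renameT f ψ₁, pvars_renameT f ψ₂]
  | .know A π ψ => pvars_renameT f ψ

lemma weight_renameT (f : ℕ → ℕ) : ∀ ψ : QFK, (ψ.renameT f).weight = ψ.weight
  | .atom a π => rfl
  | .patom q => rfl
  | .not ψ => weight_renameT f ψ
  | .and ψ₁ ψ₂ => by
      simp only [QFK.renameT, QFK.weight, weight_renameT f ψ₁, weight_renameT f ψ₂]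
  | .next ψ => weight_renameT f ψ
  | .xuntil ψ₁ ψ₂ => by
      simp only [QFK.renameT, QFK.weight, weight_renameT f ψ₁, weight_renameT f ψ₂]
  | .know A π ψ => by
      simp only [QFK.renameT, QFK.weight, weight_renameT f ψ]

lemma sat_renameT : ∀ (ψ : QFK) (f : ℕ → ℕ),
    (∀ v ∈ ψ.tvars, ∀ w ∈ ψ.tvars, f v = f w → v = w) →
    ∀ Pi σ i, (QFK.Sat T Pi σ i (ψ.renameT f) ↔ QFK.Sat T (fun v => Pi (f v)) σ i ψ)
  | .atom a π, f, hf, Pi, σ, i => Iff.rfl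
  | .patom q, f, hf, Pi, σ, i => Iff.rfl
  | .not ψ, f, hf, Pi, σ, i => not_congr (sat_renameT ψ f hf Pi σ i)
  | .and ψ₁ ψ₂, f, hf, Pi, σ, i => by
      simp only [QFK.tvars, Finset.mem_union] at hf
      exact and_congr
        (sat_renameT ψ₁ f (fun v hv w hw => hf v (Or.inl hv) w (Or.inl hw)) Pi σ i)
        (sat_renameT ψ₂ f (fun v hv w hw => hf v (Or.inr hv) w (Or.inr hw)) Pi σ i)
  | .next ψ, f, hf, Pi, σ, i => sat_renameT ψ f hf Pi σ (i+1)
  | .xuntil ψ₁ ψ₂, f, hf, Pi, σ, i => by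
      simp only [QFK.tvars, Finset.mem_union] at hf
      refine exists_congr fun k => and_congr_right fun _ => and_congr
        (sat_renameT ψ₂ f (fun v hv w hw => hf v (Or.inr hv) w (Or.inr hw)) Pi σ k)
        (forall_congr' fun j => imp_congr_right fun _ => imp_congr_right fun _ =>
          sat_renameT ψ₁ f (fun v hv w hw => hf v (Or.inl hv) w (Or.inl hw)) Pi σ j)
  | .know A π ψ, f, hf, Pi, σ, i => by
      simp only [QFK.tvars, Finset.mem_insert] at hf
      simp only [QFK.renameT, sat_know]
      refine forall_congr' fun t' => imp_congr_right fun _ => imp_congr_right fun _ => ?_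
      have h1 := sat_renameT ψ f
        (fun v hv w hw => hf v (Or.inr hv) w (Or.inr hw))
        (Function.update Pi (f π) t') σ i
      rw [h1]
      refine sat_congr ψ (fun v hv => ?_) (fun q _ => rfl) i
      by_cases hv' : v = π
      · subst hv'; simp
      · have : f v ≠ f π := fun h =>
          hv' (hf v (Or.inr hv) π (Or.inl rfl) h)
        simp [Function.update_of_ne hv', Function.update_of_ne this]

end Rename

section Repl

lemma repl_none : ∀ (ψ : QFK) (u : ℕ), QFK.repl u ψ = none → ψ.weight = 0
  | .atom _ _, u, _ => rfl
  | .patom _, u, _ => rfl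
  | .not ψ, u, h => by
      simp only [QFK.repl, Option.map_eq_none_iff] at h
      exact repl_none ψ u h
  | .and ψ₁ ψ₂, u, h => by
      simp only [QFK.repl] at h
      rcases h1 : QFK.repl u ψ₁ with _ | p
      · rw [h1] at h
        simp only [Option.map_eq_none_iff] at h
        simp [QFK.weight, repl_none ψ₁ u h1, repl_none ψ₂ u h]
      · rw [h1] at h; simp at h
  | .next ψ, u, h => by
      simp only [QFK.repl, Option.map_eq_none_iff] at h
      exact repl_none ψ u h
  | .xuntil ψ₁ ψ₂, u, h => by
      simp only [QFK.repl] at h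
      rcases h1 : QFK.repl u ψ₁ with _ | p
      · rw [h1] at h
        simp only [Option.map_eq_none_iff] at h
        simp [QFK.weight, repl_none ψ₁ u h1, repl_none ψ₂ u h]
      · rw [h1] at h; simp at h
  | .know A π ψ, u, h => by simp [QFK.repl] at h

lemma repl_spec : ∀ (ψ : QFK) (u : ℕ) (A : Finset ℕ) (π : ℕ) (b ψh : QFK),
    QFK.repl u ψ = some ((A, π, b), ψh) →
    (ψ.weight = ψh.weight + (1 + 3 * b.weight)) ∧
    ψh.tvars ⊆ ψ.tvars ∧ ψh.pvars ⊆ insert u ψ.pvars ∧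
    insert π b.tvars ⊆ ψ.tvars ∧ b.pvars ⊆ ψ.pvars ∧
    ∀ (T : Set Trace) Pi σ,
      (∀ j : ℕ, j ∈ σ u ↔ QFK.Sat T Pi σ j (.know A π b)) →
      ∀ i, (QFK.Sat T Pi σ i ψh ↔ QFK.Sat T Pi σ i ψ)
  | .atom _ _, u, A, π, b, ψh, h => by simp [QFK.repl] at h
  | .patom _, u, A, π, b, ψh, h => by simp [QFK.repl] at h
  | .not ψ, u, A, π, b, ψh, h => by
      simp only [QFK.repl, Option.map_eq_some_iff] at h
      obtain ⟨⟨d, c⟩, h1, h2⟩ := h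
      obtain ⟨rfl, rfl⟩ : d = (A, π, b) ∧ ψh = QFK.not c := by
        injection h2 with h2a h2b; exact ⟨h2a, h2b.symm⟩
      obtain ⟨hw, ht, hp, hkt, hkp, hs⟩ := repl_spec ψ u A π b c h1
      refine ⟨by simp [QFK.weight]; omega, ht, hp, hkt, hkp, ?_⟩
      intro T Pi σ hσ i
      simp only [sat_not]
      exact not_congr (hs T Pi σ hσ i)
  | .and ψ₁ ψ₂, u, A, π, b, ψh, h => by
      simp only [QFK.repl] at h
      rcases h1 : QFK.repl u ψ₁ with _ | ⟨d, c⟩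
      · rw [h1] at h
        simp only [Option.map_eq_some_iff] at h
        obtain ⟨⟨d, c⟩, h2, h3⟩ := h
        obtain ⟨rfl, rfl⟩ : d = (A, π, b) ∧ ψh = QFK.and ψ₁ c := by
          injection h3 with h3a h3b; exact ⟨h3a, h3b.symm⟩
        obtain ⟨hw, ht, hp, hkt, hkp, hs⟩ := repl_spec ψ₂ u A π b c h2
        refine ⟨by simp [QFK.weight, QFK.tvars]; omega, ?_, ?_, ?_, ?_, ?_⟩
        · simp only [QFK.tvars]
          exact Finset.union_subset_union (le_refl _) ht
        · simp only [QFK.pvars]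
          intro x hx
          rcases Finset.mem_union.1 hx with hx | hx
          · exact Finset.mem_insert_of_mem (Finset.mem_union_left _ hx)
          · rcases Finset.mem_insert.1 (hp hx) with hx | hx
            · exact hx ▸ Finset.mem_insert_self _ _
            · exact Finset.mem_insert_of_mem (Finset.mem_union_right _ hx)
        · exact hkt.trans (Finset.subset_union_right)
        · exact hkp.trans (Finset.subset_union_right)
        · intro T Pi σ hσ i
          simp only [sat_and]
          exact and_congr Iff.rfl (hs T Pi σ hσ i)
      · rw [h1] at h
        obtain ⟨rfl, rfl⟩ : d = (A, π, b) ∧ ψh = QFK.and c ψ₂ := by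
          injection h with h'; injection h' with ha hb; exact ⟨ha, hb.symm⟩
        obtain ⟨hw, ht, hp, hkt, hkp, hs⟩ := repl_spec ψ₁ u A π b c h1
        refine ⟨by simp [QFK.weight]; omega, ?_, ?_, ?_, ?_, ?_⟩
        · simp only [QFK.tvars]
          exact Finset.union_subset_union ht (le_refl _)
        · simp only [QFK.pvars]
          intro x hx
          rcases Finset.mem_union.1 hx with hx | hx
          · rcases Finset.mem_insert.1 (hp hx) with hx | hx
            · exact hx ▸ Finset.mem_insert_self _ _
            · exact Finset.mem_insert_of_mem (Finset.mem_union_left _ hx)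
          · exact Finset.mem_insert_of_mem (Finset.mem_union_right _ hx)
        · exact hkt.trans (Finset.subset_union_left)
        · exact hkp.trans (Finset.subset_union_left)
        · intro T Pi σ hσ i
          simp only [sat_and]
          exact and_congr (hs T Pi σ hσ i) Iff.rfl
  | .next ψ, u, A, π, b, ψh, h => by
      simp only [QFK.repl, Option.map_eq_some_iff] at h
      obtain ⟨⟨d, c⟩, h1, h2⟩ := h
      obtain ⟨rfl, rfl⟩ : d = (A, π, b) ∧ ψh = QFK.next c := by
        injection h2 with h2a h2b; exact ⟨h2a, h2b.symm⟩
      obtain ⟨hw, ht, hp, hkt, hkp, hs⟩ := repl_spec ψ u A π b c h1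
      refine ⟨by simp [QFK.weight]; omega, ht, hp, hkt, hkp, ?_⟩
      intro T Pi σ hσ i
      simp only [sat_next]
      exact hs T Pi σ hσ (i+1)
  | .xuntil ψ₁ ψ₂, u, A, π, b, ψh, h => by
      simp only [QFK.repl] at h
      rcases h1 : QFK.repl u ψ₁ with _ | ⟨d, c⟩
      · rw [h1] at h
        simp only [Option.map_eq_some_iff] at h
        obtain ⟨⟨d, c⟩, h2, h3⟩ := h
        obtain ⟨rfl, rfl⟩ : d = (A, π, b) ∧ ψh = QFK.xuntil ψ₁ c := by
          injection h3 with h3a h3b; exact ⟨h3a, h3b.symm⟩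
        obtain ⟨hw, ht, hp, hkt, hkp, hs⟩ := repl_spec ψ₂ u A π b c h2
        refine ⟨by simp [QFK.weight]; omega, ?_, ?_, ?_, ?_, ?_⟩
        · simp only [QFK.tvars]
          exact Finset.union_subset_union (le_refl _) ht
        · simp only [QFK.pvars]
          intro x hx
          rcases Finset.mem_union.1 hx with hx | hx
          · exact Finset.mem_insert_of_mem (Finset.mem_union_left _ hx)
          · rcases Finset.mem_insert.1 (hp hx) with hx | hx
            · exact hx ▸ Finset.mem_insert_self _ _
            · exact Finset.mem_insert_of_mem (Finset.mem_union_right _ hx)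
        · exact hkt.trans (Finset.subset_union_right)
        · exact hkp.trans (Finset.subset_union_right)
        · intro T Pi σ hσ i
          simp only [sat_xuntil]
          exact exists_congr fun k => and_congr_right fun _ =>
            and_congr (hs T Pi σ hσ k) Iff.rfl
      · rw [h1] at h
        obtain ⟨rfl, rfl⟩ : d = (A, π, b) ∧ ψh = QFK.xuntil c ψ₂ := by
          injection h with h'; injection h' with ha hb; exact ⟨ha, hb.symm⟩
        obtain ⟨hw, ht, hp, hkt, hkp, hs⟩ := repl_spec ψ₁ u A π b c h1
        refine ⟨by simp [QFK.weight]; omega, ?_, ?_, ?_, ?_, ?_⟩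
        · simp only [QFK.tvars]
          exact Finset.union_subset_union ht (le_refl _)
        · simp only [QFK.pvars]
          intro x hx
          rcases Finset.mem_union.1 hx with hx | hx
          · rcases Finset.mem_insert.1 (hp hx) with hx | hx
            · exact hx ▸ Finset.mem_insert_self _ _
            · exact Finset.mem_insert_of_mem (Finset.mem_union_left _ hx)
          · exact Finset.mem_insert_of_mem (Finset.mem_union_right _ hx)
        · exact hkt.trans (Finset.subset_union_left)
        · exact hkp.trans (Finset.subset_union_left)
        · intro T Pi σ hσ i
          simp only [sat_xuntil]
          exact exists_congr fun k => and_congr_right fun _ =>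
            and_congr Iff.rfl (forall_congr' fun j => imp_congr_right fun _ =>
              imp_congr_right fun _ => hs T Pi σ hσ j)
  | .know A' π' b', u, A, π, b, ψh, h => by
      simp only [QFK.repl, Option.some_inj] at h
      obtain ⟨h1, rfl⟩ : ((A' : Finset ℕ), π', b') = (A, π, b) ∧ ψh = QFK.patom u := by
        injection h with ha hb; exact ⟨ha, hb.symm⟩
      obtain ⟨rfl, rfl, rfl⟩ : A' = A ∧ π' = π ∧ b' = b := by
        injection h1 with h1a h1b; injection h1b with h1b h1c
        exact ⟨h1a, h1b, h1c⟩
      refine ⟨by simp [QFK.weight, QFK.pvars], by simp [QFK.tvars, QFK.pvars],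
        by simp [QFK.tvars, QFK.pvars], by simp [QFK.tvars], by simp [QFK.pvars], ?_⟩
      intro T Pi σ hσ i
      simpa using (hσ i)

end Repl

section EraseK

lemma eraseK_tvars : ∀ ψ : QFK, ψ.eraseK.tvars ⊆ ψ.tvars
  | .atom a π => by simp [QFK.eraseK, QFK.tvars, QF.tvars]
  | .patom q => by simp [QFK.eraseK, QFK.tvars, QF.tvars]
  | .not ψ => eraseK_tvars ψ
  | .and ψ₁ ψ₂ => Finset.union_subset_union (eraseK_tvars ψ₁) (eraseK_tvars ψ₂)
  | .next ψ => eraseK_tvars ψ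
  | .xuntil ψ₁ ψ₂ => Finset.union_subset_union (eraseK_tvars ψ₁) (eraseK_tvars ψ₂)
  | .know A π ψ => (eraseK_tvars ψ).trans (by simp [QFK.tvars, Finset.subset_insert])

lemma eraseK_pvars : ∀ ψ : QFK, ψ.eraseK.pvars ⊆ ψ.pvars
  | .atom a π => by simp [QFK.eraseK, QFK.pvars, QF.pvars]
  | .patom q => by simp [QFK.eraseK, QFK.pvars, QF.pvars]
  | .not ψ => eraseK_pvars ψ
  | .and ψ₁ ψ₂ => Finset.union_subset_union (eraseK_pvars ψ₁) (eraseK_pvars ψ₂)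
  | .next ψ => eraseK_pvars ψ
  | .xuntil ψ₁ ψ₂ => Finset.union_subset_union (eraseK_pvars ψ₁) (eraseK_pvars ψ₂)
  | .know A π ψ => eraseK_pvars ψ

lemma eraseK_sat : ∀ ψ : QFK, ψ.weight = 0 → ∀ (T : Set Trace) Pi σ i,
    (QF.Sat Pi σ i ψ.eraseK ↔ QFK.Sat T Pi σ i ψ)
  | .atom a π, h, T, Pi, σ, i => Iff.rfl
  | .patom q, h, T, Pi, σ, i => Iff.rfl
  | .not ψ, h, T, Pi, σ, i => not_congr (eraseK_sat ψ h T Pi σ i)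
  | .and ψ₁ ψ₂, h, T, Pi, σ, i => by
      simp only [QFK.weight, Nat.add_eq_zero] at h
      exact and_congr (eraseK_sat ψ₁ h.1 T Pi σ i) (eraseK_sat ψ₂ h.2 T Pi σ i)
  | .next ψ, h, T, Pi, σ, i => eraseK_sat ψ h T Pi σ (i+1)
  | .xuntil ψ₁ ψ₂, h, T, Pi, σ, i => by
      simp only [QFK.weight, Nat.add_eq_zero] at h
      exact exists_congr fun k => and_congr_right fun _ => and_congr
        (eraseK_sat ψ₂ h.2 T Pi σ k) (forall_congr' fun j => imp_congr_right fun _ =>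
          imp_congr_right fun _ => eraseK_sat ψ₁ h.1 T Pi σ j)
  | .know A π ψ, h, T, Pi, σ, i => by simp [QFK.weight] at h

end EraseK

/-! ### First trace quantifier and matrix weight -/

def HyperQPTLK.firstTQ : HyperQPTLK → Option Bool
  | .qf _ => none
  | .ex _ _ => some false
  | .all _ _ => some true
  | .pex _ φ => φ.firstTQ
  | .pall _ φ => φ.firstTQ

def HyperQPTL.firstTQ : HyperQPTL → Option Bool
  | .qf _ => none
  | .ex _ _ => some false
  | .all _ _ => some true
  | .pex _ φ => φ.firstTQ
  | .pall _ φ => φ.firstTQ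

def HyperQPTLK.mweight : HyperQPTLK → ℕ
  | .qf ψ => ψ.weight
  | .ex _ φ => φ.mweight
  | .all _ φ => φ.mweight
  | .pex _ φ => φ.mweight
  | .pall _ φ => φ.mweight

lemma satK_empty_true : ∀ (φ : HyperQPTLK), φ.firstTQ = some true →
    ∀ Pi σ i, HyperQPTLK.Sat ∅ Pi σ i φ
  | .qf ψ, h, Pi, σ, i => by simp [HyperQPTLK.firstTQ] at h
  | .ex π φ, h, Pi, σ, i => by simp [HyperQPTLK.firstTQ] at h
  | .all π φ, h, Pi, σ, i => by
      intro t ht; exact absurd ht (Set.notMem_empty t)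
  | .pex q φ, h, Pi, σ, i =>
      ⟨∅, satK_empty_true φ h _ _ i⟩
  | .pall q φ, h, Pi, σ, i =>
      fun s => satK_empty_true φ h _ _ i

lemma satK_empty_false : ∀ (φ : HyperQPTLK), φ.firstTQ = some false →
    ∀ Pi σ i, ¬ HyperQPTLK.Sat ∅ Pi σ i φ
  | .qf ψ, h, Pi, σ, i => by simp [HyperQPTLK.firstTQ] at h
  | .ex π φ, h, Pi, σ, i => by rintro ⟨t, ht, -⟩; exact Set.notMem_empty t ht
  | .all π φ, h, Pi, σ, i => by simp [HyperQPTLK.firstTQ] at h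
  | .pex q φ, h, Pi, σ, i => by
      rintro ⟨s, hs⟩; exact satK_empty_false φ h _ _ i hs
  | .pall q φ, h, Pi, σ, i => fun hs =>
      satK_empty_false φ h _ _ i (hs ∅)

lemma sat_empty_true : ∀ (φ : HyperQPTL), φ.firstTQ = some true →
    ∀ Pi σ i, HyperQPTL.Sat ∅ Pi σ i φ
  | .qf ψ, h, Pi, σ, i => by simp [HyperQPTL.firstTQ] at h
  | .ex π φ, h, Pi, σ, i => by simp [HyperQPTL.firstTQ] at h
  | .all π φ, h, Pi, σ, i => by
      intro t ht; exact absurd ht (Set.notMem_empty t)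
  | .pex q φ, h, Pi, σ, i => ⟨∅, sat_empty_true φ h _ _ i⟩
  | .pall q φ, h, Pi, σ, i => fun s => sat_empty_true φ h _ _ i

lemma sat_empty_false : ∀ (φ : HyperQPTL), φ.firstTQ = some false →
    ∀ Pi σ i, ¬ HyperQPTL.Sat ∅ Pi σ i φ
  | .qf ψ, h, Pi, σ, i => by simp [HyperQPTL.firstTQ] at h
  | .ex π φ, h, Pi, σ, i => by rintro ⟨t, ht, -⟩; exact Set.notMem_empty t ht
  | .all π φ, h, Pi, σ, i => by simp [HyperQPTL.firstTQ] at h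
  | .pex q φ, h, Pi, σ, i => by
      rintro ⟨s, hs⟩; exact sat_empty_false φ h _ _ i hs
  | .pall q φ, h, Pi, σ, i => fun hs => sat_empty_false φ h _ _ i (hs ∅)

/-- A quantifier-free HyperQPTL formula without trace variables ignores `Pi`
entirely; in particular its satisfaction relation is indep. of nothing else,
we only need `T`-independence of HyperQPTL/HyperQPTLK formulas below. -/
lemma satK_T_irrel : ∀ (φ : HyperQPTLK), φ.firstTQ = none → φ.freeT = ∅ →
    ∀ (T T' : Set Trace) Pi σ i,
      (HyperQPTLK.Sat T Pi σ i φ ↔ HyperQPTLK.Sat T' Pi σ i φ)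
  | .qf ψ, h, hf, T, T', Pi, σ, i => sat_T_irrel ψ hf T' Pi σ i
  | .ex π φ, h, hf, T, T', Pi, σ, i => by simp [HyperQPTLK.firstTQ] at h
  | .all π φ, h, hf, T, T', Pi, σ, i => by simp [HyperQPTLK.firstTQ] at h
  | .pex q φ, h, hf, T, T', Pi, σ, i =>
      exists_congr fun s => satK_T_irrel φ h hf T T' Pi _ i
  | .pall q φ, h, hf, T, T', Pi, σ, i =>
      forall_congr' fun s => satK_T_irrel φ h hf T T' Pi _ i

lemma qf_sat_T_irrel : ∀ (ψ : QF), True → ∀ Pi σ i (T T' : Set Trace),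
    (HyperQPTL.Sat T Pi σ i (.qf ψ) ↔ HyperQPTL.Sat T' Pi σ i (.qf ψ)) :=
  fun _ _ _ _ _ _ _ => Iff.rfl

lemma sat_hq_T_irrel : ∀ (φ : HyperQPTL), φ.firstTQ = none →
    ∀ (T T' : Set Trace) Pi σ i,
      (HyperQPTL.Sat T Pi σ i φ ↔ HyperQPTL.Sat T' Pi σ i φ)
  | .qf ψ, h, T, T', Pi, σ, i => Iff.rfl
  | .ex π φ, h, T, T', Pi, σ, i => by simp [HyperQPTL.firstTQ] at h
  | .all π φ, h, T, T', Pi, σ, i => by simp [HyperQPTL.firstTQ] at h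
  | .pex q φ, h, T, T', Pi, σ, i =>
      exists_congr fun s => sat_hq_T_irrel φ h T T' Pi _ i
  | .pall q φ, h, T, T', Pi, σ, i =>
      forall_congr' fun s => sat_hq_T_irrel φ h T T' Pi _ i

/-! ### The one-step translation of a `know` operator -/

noncomputable def knowC1 (u r π₁ : ℕ) (A : Finset ℕ) (π : ℕ) (b : QFK) : QFK :=
  QFK.qimp
    (.and (QFK.mark u r (.patom u))
      (QFK.qG u (QFK.qimp (.patom r) (QFK.agreeF A π π₁ u))))
    (QFK.qG u (QFK.qimp (QFK.endr r) (b.renameT (fun v => if v = π then π₁ else v))))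

noncomputable def knowC2 (u r π₂ : ℕ) (A : Finset ℕ) (π : ℕ) (b : QFK) : QFK :=
  QFK.qimp (QFK.mark u r (.not (.patom u)))
    (.and (QFK.qG u (QFK.qimp (.patom r) (QFK.agreeF A π π₂ u)))
      (QFK.qG u (QFK.qimp (QFK.endr r)
        (.not (b.renameT (fun v => if v = π then π₂ else v))))))

noncomputable def stepF (u r π₁ π₂ : ℕ) (A : Finset ℕ) (π : ℕ) (b ψh : QFK) :
    HyperQPTLK :=
  .pex u (.pall r (.all π₁ (.ex π₂ (.qf
    (.and (knowC1 u r π₁ A π b) (.and (knowC2 u r π₂ A π b) ψh))))))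

section VarLemmas

@[simp] lemma tvars_atom (a π : ℕ) : (QFK.atom a π).tvars = {π} := rfl
@[simp] lemma tvars_patom (q : ℕ) : (QFK.patom q).tvars = ∅ := rfl
@[simp] lemma tvars_not (a : QFK) : a.not.tvars = a.tvars := rfl
@[simp] lemma tvars_and (a b : QFK) : (a.and b).tvars = a.tvars ∪ b.tvars := rfl
@[simp] lemma tvars_next (a : QFK) : a.next.tvars = a.tvars := rfl
@[simp] lemma tvars_xuntil (a b : QFK) : (a.xuntil b).tvars = a.tvars ∪ b.tvars := rfl
@[simp] lemma tvars_know (A : Finset ℕ) (π : ℕ) (b : QFK) :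
    (QFK.know A π b).tvars = insert π b.tvars := rfl
@[simp] lemma pvars_atom (a π : ℕ) : (QFK.atom a π).pvars = ∅ := rfl
@[simp] lemma pvars_patom (q : ℕ) : (QFK.patom q).pvars = {q} := rfl
@[simp] lemma pvars_not (a : QFK) : a.not.pvars = a.pvars := rfl
@[simp] lemma pvars_and (a b : QFK) : (a.and b).pvars = a.pvars ∪ b.pvars := rfl
@[simp] lemma pvars_next (a : QFK) : a.next.pvars = a.pvars := rfl
@[simp] lemma pvars_xuntil (a b : QFK) : (a.xuntil b).pvars = a.pvars ∪ b.pvars := rfl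
@[simp] lemma pvars_know (A : Finset ℕ) (π : ℕ) (b : QFK) :
    (QFK.know A π b).pvars = b.pvars := rfl
@[simp] lemma weight_atom (a π : ℕ) : (QFK.atom a π).weight = 0 := rfl
@[simp] lemma weight_patom (q : ℕ) : (QFK.patom q).weight = 0 := rfl
@[simp] lemma weight_not (a : QFK) : a.not.weight = a.weight := rfl
@[simp] lemma weight_and (a b : QFK) : (a.and b).weight = a.weight + b.weight := rfl
@[simp] lemma weight_next (a : QFK) : a.next.weight = a.weight := rfl
@[simp] lemma weight_xuntil (a b : QFK) :
    (a.xuntil b).weight = a.weight + b.weight := rfl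

@[simp] lemma tvars_qimp (a b : QFK) : (QFK.qimp a b).tvars = a.tvars ∪ b.tvars := rfl
@[simp] lemma pvars_qimp (a b : QFK) : (QFK.qimp a b).pvars = a.pvars ∪ b.pvars := rfl
@[simp] lemma weight_qimp (a b : QFK) :
    (QFK.qimp a b).weight = a.weight + b.weight := rfl
@[simp] lemma tvars_qtt (u : ℕ) : (QFK.qtt u).tvars = ∅ := by
  simp [QFK.qtt]
@[simp] lemma pvars_qtt (u : ℕ) : (QFK.qtt u).pvars = {u} := by
  simp [QFK.qtt]
@[simp] lemma weight_qtt (u : ℕ) : (QFK.qtt u).weight = 0 := rfl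
@[simp] lemma tvars_qG (u : ℕ) (a : QFK) : (QFK.qG u a).tvars = a.tvars := by
  simp [QFK.qG]
@[simp] lemma pvars_qG (u : ℕ) (a : QFK) : (QFK.qG u a).pvars = {u} ∪ a.pvars := by
  simp [QFK.qG]
@[simp] lemma weight_qG (u : ℕ) (a : QFK) : (QFK.qG u a).weight = a.weight := by
  simp [QFK.qG]
@[simp] lemma tvars_endr (r : ℕ) : (QFK.endr r).tvars = ∅ := by simp [QFK.endr]
@[simp] lemma pvars_endr (r : ℕ) : (QFK.endr r).pvars = {r} := by simp [QFK.endr]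
@[simp] lemma weight_endr (r : ℕ) : (QFK.endr r).weight = 0 := rfl
@[simp] lemma tvars_mark (u r : ℕ) (L : QFK) :
    (QFK.mark u r L).tvars = L.tvars := by simp [QFK.mark]
@[simp] lemma pvars_mark (u r : ℕ) (L : QFK) :
    (QFK.mark u r L).pvars = {r} ∪ (L.pvars ∪ {u}) := by
  simp [QFK.mark]
@[simp] lemma weight_mark (u r : ℕ) (L : QFK) :
    (QFK.mark u r L).weight = L.weight := by simp [QFK.mark]

lemma agreeF_tvars (A : Finset ℕ) (π π' u : ℕ) :
    (QFK.agreeF A π π' u).tvars ⊆ {π, π'} := by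
  unfold QFK.agreeF
  induction A.toList with
  | nil => simp
  | cons a l ih =>
      simp only [List.foldr, tvars_and]
      refine Finset.union_subset ?_ ih
      intro x hx
      simp only [QFK.qiff, tvars_and, tvars_qimp, tvars_atom,
        Finset.mem_union, Finset.mem_singleton] at hx
      simp only [Finset.mem_insert, Finset.mem_singleton]
      tauto

lemma agreeF_pvars (A : Finset ℕ) (π π' u : ℕ) :
    (QFK.agreeF A π π' u).pvars ⊆ {u} := by
  unfold QFK.agreeF
  induction A.toList with
  | nil => simp
  | cons a l ih =>
      simp only [List.foldr, pvars_and]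
      refine Finset.union_subset ?_ ih
      intro x hx
      simp [QFK.qiff] at hx

lemma agreeF_weight (A : Finset ℕ) (π π' u : ℕ) :
    (QFK.agreeF A π π' u).weight = 0 := by
  unfold QFK.agreeF
  induction A.toList with
  | nil => simp
  | cons a l ih =>
      simp only [List.foldr, weight_and, ih]
      simp [QFK.qiff]

lemma renameT_ite_tvars (b : QFK) (π π' : ℕ) :
    (b.renameT (fun v => if v = π then π' else v)).tvars ⊆ insert π' b.tvars := by
  refine (tvars_renameT _ b).trans ?_
  intro x hx
  obtain ⟨v, hv, rfl⟩ := Finset.mem_image.1 hx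
  by_cases h : v = π
  · simp [h]
  · simp [h, Finset.mem_insert_of_mem hv]

lemma knowC1_tvars (u r π₁ : ℕ) (A : Finset ℕ) (π : ℕ) (b : QFK) :
    (knowC1 u r π₁ A π b).tvars ⊆ insert π₁ (insert π b.tvars) := by
  unfold knowC1
  intro x hx
  simp only [tvars_qimp, tvars_and, tvars_mark, tvars_patom, tvars_qG,
    tvars_endr, Finset.empty_union, Finset.union_empty, Finset.mem_union] at hx
  rcases hx with h | h
  · have := agreeF_tvars A π π₁ u h
    simp only [Finset.mem_insert, Finset.mem_singleton] at this
    simp only [Finset.mem_insert]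
    tauto
  · have := renameT_ite_tvars b π π₁ h
    simp only [Finset.mem_insert] at this ⊢
    tauto

lemma knowC2_tvars (u r π₂ : ℕ) (A : Finset ℕ) (π : ℕ) (b : QFK) :
    (knowC2 u r π₂ A π b).tvars ⊆ insert π₂ (insert π b.tvars) := by
  unfold knowC2
  intro x hx
  simp only [tvars_qimp, tvars_and, tvars_mark, tvars_patom, tvars_not, tvars_qG,
    tvars_endr, Finset.empty_union, Finset.union_empty, Finset.mem_union] at hx
  rcases hx with h | h
  · have := agreeF_tvars A π π₂ u h
    simp only [Finset.mem_insert, Finset.mem_singleton] at this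
    simp only [Finset.mem_insert]
    tauto
  · have := renameT_ite_tvars b π π₂ h
    simp only [Finset.mem_insert] at this ⊢
    tauto

lemma knowC1_pvars (u r π₁ : ℕ) (A : Finset ℕ) (π : ℕ) (b : QFK) :
    (knowC1 u r π₁ A π b).pvars ⊆ insert u (insert r b.pvars) := by
  unfold knowC1
  intro x hx
  simp only [pvars_qimp, pvars_and, pvars_mark, pvars_patom, pvars_qG,
    pvars_endr, pvars_renameT, Finset.mem_union, Finset.mem_singleton] at hx
  simp only [Finset.mem_insert]
  have hA : x ∈ (QFK.agreeF A π π₁ u).pvars → x = u := fun h =>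
    Finset.mem_singleton.1 (agreeF_pvars A π π₁ u h)
  tauto

lemma knowC2_pvars (u r π₂ : ℕ) (A : Finset ℕ) (π : ℕ) (b : QFK) :
    (knowC2 u r π₂ A π b).pvars ⊆ insert u (insert r b.pvars) := by
  unfold knowC2
  intro x hx
  simp only [pvars_qimp, pvars_and, pvars_mark, pvars_patom, pvars_not, pvars_qG,
    pvars_endr, pvars_renameT, Finset.mem_union, Finset.mem_singleton] at hx
  simp only [Finset.mem_insert]
  have hA : x ∈ (QFK.agreeF A π π₂ u).pvars → x = u := fun h =>
    Finset.mem_singleton.1 (agreeF_pvars A π π₂ u h)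
  tauto

lemma knowC1_weight (u r π₁ : ℕ) (A : Finset ℕ) (π : ℕ) (b : QFK) :
    (knowC1 u r π₁ A π b).weight = b.weight := by
  unfold knowC1
  simp [agreeF_weight, weight_renameT]

lemma knowC2_weight (u r π₂ : ℕ) (A : Finset ℕ) (π : ℕ) (b : QFK) :
    (knowC2 u r π₂ A π b).weight = b.weight := by
  unfold knowC2
  simp [agreeF_weight, weight_renameT]

end VarLemmas

section SatHK

variable {T : Set Trace} {Pi : ℕ → Trace} {σ : ℕ → Set ℕ}

@[simp] lemma hksat_qf {ψ : QFK} {i : ℕ} :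
    HyperQPTLK.Sat T Pi σ i (.qf ψ) ↔ QFK.Sat T Pi σ i ψ := Iff.rfl
@[simp] lemma hksat_ex {π : ℕ} {φ : HyperQPTLK} {i : ℕ} :
    HyperQPTLK.Sat T Pi σ i (.ex π φ) ↔
      ∃ t ∈ T, HyperQPTLK.Sat T (Function.update Pi π t) σ i φ := Iff.rfl
@[simp] lemma hksat_all {π : ℕ} {φ : HyperQPTLK} {i : ℕ} :
    HyperQPTLK.Sat T Pi σ i (.all π φ) ↔
      ∀ t ∈ T, HyperQPTLK.Sat T (Function.update Pi π t) σ i φ := Iff.rfl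
@[simp] lemma hksat_pex {q : ℕ} {φ : HyperQPTLK} {i : ℕ} :
    HyperQPTLK.Sat T Pi σ i (.pex q φ) ↔
      ∃ s : Set ℕ, HyperQPTLK.Sat T Pi (Function.update σ q s) i φ := Iff.rfl
@[simp] lemma hksat_pall {q : ℕ} {φ : HyperQPTLK} {i : ℕ} :
    HyperQPTLK.Sat T Pi σ i (.pall q φ) ↔
      ∀ s : Set ℕ, HyperQPTLK.Sat T Pi (Function.update σ q s) i φ := Iff.rfl

@[simp] lemma hsat_qf {ψ : QF} {i : ℕ} :
    HyperQPTL.Sat T Pi σ i (.qf ψ) ↔ QF.Sat Pi σ i ψ := Iff.rfl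
@[simp] lemma hsat_ex {π : ℕ} {φ : HyperQPTL} {i : ℕ} :
    HyperQPTL.Sat T Pi σ i (.ex π φ) ↔
      ∃ t ∈ T, HyperQPTL.Sat T (Function.update Pi π t) σ i φ := Iff.rfl
@[simp] lemma hsat_all {π : ℕ} {φ : HyperQPTL} {i : ℕ} :
    HyperQPTL.Sat T Pi σ i (.all π φ) ↔
      ∀ t ∈ T, HyperQPTL.Sat T (Function.update Pi π t) σ i φ := Iff.rfl
@[simp] lemma hsat_pex {q : ℕ} {φ : HyperQPTL} {i : ℕ} :
    HyperQPTL.Sat T Pi σ i (.pex q φ) ↔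
      ∃ s : Set ℕ, HyperQPTL.Sat T Pi (Function.update σ q s) i φ := Iff.rfl
@[simp] lemma hsat_pall {q : ℕ} {φ : HyperQPTL} {i : ℕ} :
    HyperQPTL.Sat T Pi σ i (.pall q φ) ↔
      ∀ s : Set ℕ, HyperQPTL.Sat T Pi (Function.update σ q s) i φ := Iff.rfl

end SatHK

/-- The key one-step elimination lemma. -/
lemma step_equiv
    (ψ b ψh : QFK) (u r π₁ π₂ : ℕ) (A : Finset ℕ) (π : ℕ)
    (hrepl : QFK.repl u ψ = some ((A, π, b), ψh))
    (hu : u ∉ ψ.pvars) (hr : r ∉ ψ.pvars) (hur : u ≠ r)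
    (hq1 : π₁ ∉ ψ.tvars) (hq2 : π₂ ∉ ψ.tvars) (hq12 : π₁ ≠ π₂)
    (T : Set Trace) (hT : T.Nonempty) (Pi : ℕ → Trace) (σ : ℕ → Set ℕ) :
    QFK.Sat T Pi σ 0 ψ ↔ HyperQPTLK.Sat T Pi σ 0 (stepF u r π₁ π₂ A π b ψh) := by
  obtain ⟨hw, htv, hpv, hkt, hkp, hs⟩ := repl_spec ψ u A π b ψh hrepl
  have hπ : π ∈ ψ.tvars := hkt (Finset.mem_insert_self _ _)
  have hbt : b.tvars ⊆ ψ.tvars := fun x hx => hkt (Finset.mem_insert_of_mem hx)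
  have hππ₁ : π ≠ π₁ := fun h => hq1 (h ▸ hπ)
  have hππ₂ : π ≠ π₂ := fun h => hq2 (h ▸ hπ)
  have hbp1 : π₁ ∉ b.tvars := fun h => hq1 (hbt h)
  have hbp2 : π₂ ∉ b.tvars := fun h => hq2 (hbt h)
  have hbu : u ∉ b.pvars := fun h => hu (hkp h)
  have hbr : r ∉ b.pvars := fun h => hr (hkp h)
  have hσu : ∀ U R : Set ℕ,
      Function.update (Function.update σ u U) r R u = U := by
    intro U R
    rw [Function.update_of_ne hur, Function.update_self]
  have hσr : ∀ U R : Set ℕ,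
      Function.update (Function.update σ u U) r R r = R := by
    intro U R; rw [Function.update_self]
  have hσq : ∀ (U R : Set ℕ) (q : ℕ), q ≠ u → q ≠ r →
      Function.update (Function.update σ u U) r R q = σ q := by
    intro U R q h1 h2
    rw [Function.update_of_ne h2, Function.update_of_ne h1]
  have hPiπ : ∀ t₁ t₂ : Trace,
      Function.update (Function.update Pi π₁ t₁) π₂ t₂ π = Pi π := by
    intro t₁ t₂
    rw [Function.update_of_ne hππ₂, Function.update_of_ne hππ₁]
  have hPiπ₁ : ∀ t₁ t₂ : Trace,
      Function.update (Function.update Pi π₁ t₁) π₂ t₂ π₁ = t₁ := by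
    intro t₁ t₂
    rw [Function.update_of_ne hq12, Function.update_self]
  have hPiπ₂ : ∀ t₁ t₂ : Trace,
      Function.update (Function.update Pi π₁ t₁) π₂ t₂ π₂ = t₂ := by
    intro t₁ t₂; rw [Function.update_self]
  have hPiv : ∀ (t₁ t₂ : Trace) (v : ℕ), v ≠ π₁ → v ≠ π₂ →
      Function.update (Function.update Pi π₁ t₁) π₂ t₂ v = Pi v := by
    intro t₁ t₂ v h1 h2
    rw [Function.update_of_ne h2, Function.update_of_ne h1]
  have hinj : ∀ π' : ℕ, π' ∉ b.tvars →
      ∀ v ∈ b.tvars, ∀ w ∈ b.tvars,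
        (if v = π then π' else v) = (if w = π then π' else w) → v = w := by
    intro π' hπ' v hv w hw h
    by_cases h1 : v = π <;> by_cases h2 : w = π <;> simp [h1, h2] at h
    · exact h1.trans h2.symm
    · exact absurd (h ▸ hw) hπ'
    · exact absurd (h ▸ hv) hπ'
    · exact h
  -- transfer of the renamed body
  have htrans₁ : ∀ (t₁ t₂ : Trace) (U R : Set ℕ) (k : ℕ),
      QFK.Sat T (Function.update (Function.update Pi π₁ t₁) π₂ t₂)
          (Function.update (Function.update σ u U) r R) k
          (b.renameT (fun v => if v = π then π₁ else v)) ↔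
        QFK.Sat T (Function.update Pi π t₁) σ k b := by
    intro t₁ t₂ U R k
    rw [sat_renameT b _ (hinj π₁ hbp1)]
    refine sat_congr b ?_ ?_ k
    · intro v hv
      by_cases h1 : v = π
      · rw [if_pos h1, hPiπ₁, h1, Function.update_self]
      · rw [if_neg h1, Function.update_of_ne h1]
        exact hPiv t₁ t₂ v (fun h => hbp1 (h ▸ hv)) (fun h => hbp2 (h ▸ hv))
    · intro q hq
      exact hσq _ _ q (fun h => hbu (h ▸ hq)) (fun h => hbr (h ▸ hq))
  have htrans₂ : ∀ (t₁ t₂ : Trace) (U R : Set ℕ) (k : ℕ),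
      QFK.Sat T (Function.update (Function.update Pi π₁ t₁) π₂ t₂)
          (Function.update (Function.update σ u U) r R) k
          (b.renameT (fun v => if v = π then π₂ else v)) ↔
        QFK.Sat T (Function.update Pi π t₂) σ k b := by
    intro t₁ t₂ U R k
    rw [sat_renameT b _ (hinj π₂ hbp2)]
    refine sat_congr b ?_ ?_ k
    · intro v hv
      by_cases h1 : v = π
      · rw [if_pos h1, hPiπ₂, h1, Function.update_self]
      · rw [if_neg h1, Function.update_of_ne h1]
        exact hPiv t₁ t₂ v (fun h => hbp1 (h ▸ hv)) (fun h => hbp2 (h ▸ hv))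
    · intro q hq
      exact hσq _ _ q (fun h => hbu (h ▸ hq)) (fun h => hbr (h ▸ hq))
  -- transfer of the agreement formulas
  have hagr₁ : ∀ (t₁ t₂ : Trace) (U R : Set ℕ) (j : ℕ),
      QFK.Sat T (Function.update (Function.update Pi π₁ t₁) π₂ t₂)
          (Function.update (Function.update σ u U) r R) j (QFK.agreeF A π π₁ u) ↔
        ∀ a ∈ A, (a ∈ Pi π j ↔ a ∈ t₁ j) := by
    intro t₁ t₂ U R j
    rw [sat_agreeF, hPiπ, hPiπ₁]
  have hagr₂ : ∀ (t₁ t₂ : Trace) (U R : Set ℕ) (j : ℕ),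
      QFK.Sat T (Function.update (Function.update Pi π₁ t₁) π₂ t₂)
          (Function.update (Function.update σ u U) r R) j (QFK.agreeF A π π₂ u) ↔
        ∀ a ∈ A, (a ∈ Pi π j ↔ a ∈ t₂ j) := by
    intro t₁ t₂ U R j
    rw [sat_agreeF, hPiπ, hPiπ₂]
  -- transfer of the know formula
  have hknow : ∀ (t₁ t₂ : Trace) (U R : Set ℕ) (j : ℕ),
      QFK.Sat T (Function.update (Function.update Pi π₁ t₁) π₂ t₂)
          (Function.update (Function.update σ u U) r R) j (QFK.know A π b) ↔
        QFK.Sat T Pi σ j (QFK.know A π b) := by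
    intro t₁ t₂ U R j
    refine sat_congr _ ?_ ?_ j
    · intro v hv
      simp only [tvars_know] at hv
      have hv' : v ∈ ψ.tvars := hkt hv
      exact hPiv t₁ t₂ v (fun h => hq1 (h ▸ hv')) (fun h => hq2 (h ▸ hv'))
    · intro q hq
      simp only [pvars_know] at hq
      exact hσq _ _ q (fun h => hbu (h ▸ hq)) (fun h => hbr (h ▸ hq))
  -- transfer of ψ itself
  have hψc : ∀ (t₁ t₂ : Trace) (U R : Set ℕ),
      QFK.Sat T (Function.update (Function.update Pi π₁ t₁) π₂ t₂)
          (Function.update (Function.update σ u U) r R) 0 ψ ↔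
        QFK.Sat T Pi σ 0 ψ := by
    intro t₁ t₂ U R
    refine sat_congr _ ?_ ?_ 0
    · intro v hv
      exact hPiv t₁ t₂ v (fun h => hq1 (h ▸ hv)) (fun h => hq2 (h ▸ hv))
    · intro q hq
      exact hσq _ _ q (fun h => hu (h ▸ hq)) (fun h => hr (h ▸ hq))
  -- transfer of ψh
  have hψh : ∀ (t₁ t₂ : Trace) (U R : Set ℕ),
      (∀ j : ℕ, j ∈ U ↔ QFK.Sat T Pi σ j (QFK.know A π b)) →
      (QFK.Sat T (Function.update (Function.update Pi π₁ t₁) π₂ t₂)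
          (Function.update (Function.update σ u U) r R) 0 ψh ↔
        QFK.Sat T Pi σ 0 ψ) := by
    intro t₁ t₂ U R hUiff
    rw [hs T (Function.update (Function.update Pi π₁ t₁) π₂ t₂)
      (Function.update (Function.update σ u U) r R)
      (fun j => by rw [hσu, hknow]; exact hUiff j) 0]
    exact hψc t₁ t₂ U R
  -- now the main equivalence
  simp only [stepF, hksat_pex, hksat_pall, hksat_all, hksat_ex, hksat_qf, sat_and]
  constructor
  · -- forward direction
    intro hsat
    refine ⟨{k | QFK.Sat T Pi σ k (QFK.know A π b)}, fun R t₁ ht₁ => ?_⟩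
    have hchoice : ∃ t₂ ∈ T,
        (∃ k, R = Set.Iic k ∧ k ∉ {k | QFK.Sat T Pi σ k (QFK.know A π b)}) →
        ∃ k, R = Set.Iic k ∧
          (∀ a ∈ A, ∀ j ≤ k, (a ∈ Pi π j ↔ a ∈ t₂ j)) ∧
          ¬ QFK.Sat T (Function.update Pi π t₂) σ k b := by
      by_cases hprem : ∃ k, R = Set.Iic k ∧
          k ∉ {k | QFK.Sat T Pi σ k (QFK.know A π b)}
      · obtain ⟨k, hRk, hk⟩ := hprem
        simp only [Set.mem_setOf_eq, sat_know] at hk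
        push_neg at hk
        obtain ⟨t', ht', hag, hnb⟩ := hk
        exact ⟨t', ht', fun _ => ⟨k, hRk, hag, hnb⟩⟩
      · exact ⟨hT.some, hT.some_mem, fun h => absurd h hprem⟩
    obtain ⟨t₂, ht₂, ht₂spec⟩ := hchoice
    refine ⟨t₂, ht₂, ?_, ?_, ?_⟩
    · -- C1
      unfold knowC1
      rw [sat_qimp]
      rintro ⟨hm, hag⟩
      rw [sat_mark] at hm
      obtain ⟨k, hRk, hkU⟩ := hm
      rw [hσr] at hRk
      rw [sat_patom, hσu] at hkU
      rw [sat_qG]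
      intro j _
      rw [sat_qimp, sat_endr, hσr, hRk]
      rintro ⟨hj1, hj2⟩
      simp only [Set.mem_Iic] at hj1 hj2
      have hjk : j = k := by omega
      subst hjk
      rw [htrans₁]
      rw [sat_qG] at hag
      have hagj : ∀ j' ≤ j, ∀ a ∈ A, (a ∈ Pi π j' ↔ a ∈ t₁ j') := by
        intro j' hj' a ha
        have h5 := hag j' (Nat.zero_le _)
        rw [sat_qimp, sat_patom, hσr, hRk] at h5
        have h6 := h5 (Set.mem_Iic.2 hj')
        rw [hagr₁] at h6
        exact h6 a ha
      exact hkU t₁ ht₁ (fun a ha j' hj' => hagj j' hj' a ha)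
    · -- C2
      unfold knowC2
      rw [sat_qimp]
      intro hm
      rw [sat_mark] at hm
      obtain ⟨k, hRk, hkU⟩ := hm
      rw [hσr] at hRk
      rw [sat_not, sat_patom, hσu] at hkU
      obtain ⟨k', hRk', hag', hnb'⟩ := ht₂spec ⟨k, hRk, hkU⟩
      have hkk' : k = k' := Set.Iic_injective (hRk.symm.trans hRk')
      subst hkk'
      rw [sat_and]
      constructor
      · rw [sat_qG]
        intro j _
        rw [sat_qimp, sat_patom, hσr, hRk]
        intro hj
        rw [hagr₂]
        intro a ha
        exact hag' a ha j (Set.mem_Iic.1 hj)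
      · rw [sat_qG]
        intro j _
        rw [sat_qimp, sat_endr, hσr, hRk]
        rintro ⟨hj1, hj2⟩
        simp only [Set.mem_Iic] at hj1 hj2
        have hjk : j = k := by omega
        subst hjk
        rw [sat_not, htrans₂]
        exact hnb'
    · -- ψh
      exact (hψh t₁ t₂ _ R (fun j => Iff.rfl)).2 hsat
  · -- backward direction
    rintro ⟨U, hU⟩
    have hUiff : ∀ k, k ∈ U ↔ QFK.Sat T Pi σ k (QFK.know A π b) := by
      intro k
      constructor
      · intro hk
        rw [sat_know]
        intro t' ht' hag
        obtain ⟨t₂, ht₂, hC1, hC2, hψh'⟩ := hU (Set.Iic k) t' ht'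
        unfold knowC1 at hC1
        rw [sat_qimp] at hC1
        have hC1' := hC1 (by
          rw [sat_and]
          constructor
          · rw [sat_mark]
            exact ⟨k, hσr _ _, by rw [sat_patom, hσu]; exact hk⟩
          · rw [sat_qG]
            intro j _
            rw [sat_qimp, sat_patom, hσr]
            intro hj
            rw [hagr₁]
            intro a ha
            exact hag a ha j (Set.mem_Iic.1 hj))
        rw [sat_qG] at hC1'
        have h7 := hC1' k (Nat.zero_le _)
        rw [sat_qimp, sat_endr, hσr] at h7
        have h8 := h7 ⟨Set.mem_Iic.2 le_rfl, by simp⟩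
        rw [htrans₁] at h8
        exact h8
      · intro hks
        by_contra hk
        obtain ⟨t₂, ht₂, hC1, hC2, _⟩ := hU (Set.Iic k) hT.some hT.some_mem
        unfold knowC2 at hC2
        rw [sat_qimp] at hC2
        have hC2' := hC2 (by
          rw [sat_mark]
          exact ⟨k, hσr _ _, by rw [sat_not, sat_patom, hσu]; exact hk⟩)
        rw [sat_and] at hC2'
        obtain ⟨hagp, hend⟩ := hC2'
        rw [sat_qG] at hagp hend
        have hagk : ∀ a ∈ A, ∀ j ≤ k, (a ∈ Pi π j ↔ a ∈ t₂ j) := by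
          intro a ha j hj
          have h5 := hagp j (Nat.zero_le _)
          rw [sat_qimp, sat_patom, hσr] at h5
          have h6 := h5 (Set.mem_Iic.2 hj)
          rw [hagr₂] at h6
          exact h6 a ha
        have hendk := hend k (Nat.zero_le _)
        rw [sat_qimp, sat_endr, hσr] at hendk
        have hendk' := hendk ⟨Set.mem_Iic.2 le_rfl, by simp⟩
        rw [sat_not, htrans₂] at hendk'
        exact hendk' (hks t₂ ht₂ hagk)
    obtain ⟨t₂, ht₂, _, _, hψh'⟩ := hU ∅ hT.some hT.some_mem
    exact (hψh hT.some t₂ U ∅ hUiff).1 hψh'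

section Driver

@[simp] lemma kfreeT_qf (ψ : QFK) : (HyperQPTLK.qf ψ).freeT = ψ.tvars := rfl
@[simp] lemma kfreeT_ex (π : ℕ) (φ : HyperQPTLK) :
    (HyperQPTLK.ex π φ).freeT = φ.freeT \ {π} := rfl
@[simp] lemma kfreeT_all (π : ℕ) (φ : HyperQPTLK) :
    (HyperQPTLK.all π φ).freeT = φ.freeT \ {π} := rfl
@[simp] lemma kfreeT_pex (q : ℕ) (φ : HyperQPTLK) :
    (HyperQPTLK.pex q φ).freeT = φ.freeT := rfl
@[simp] lemma kfreeT_pall (q : ℕ) (φ : HyperQPTLK) :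
    (HyperQPTLK.pall q φ).freeT = φ.freeT := rfl
@[simp] lemma kfreeP_qf (ψ : QFK) : (HyperQPTLK.qf ψ).freeP = ψ.pvars := rfl
@[simp] lemma kfreeP_ex (π : ℕ) (φ : HyperQPTLK) :
    (HyperQPTLK.ex π φ).freeP = φ.freeP := rfl
@[simp] lemma kfreeP_all (π : ℕ) (φ : HyperQPTLK) :
    (HyperQPTLK.all π φ).freeP = φ.freeP := rfl
@[simp] lemma kfreeP_pex (q : ℕ) (φ : HyperQPTLK) :
    (HyperQPTLK.pex q φ).freeP = φ.freeP \ {q} := rfl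
@[simp] lemma kfreeP_pall (q : ℕ) (φ : HyperQPTLK) :
    (HyperQPTLK.pall q φ).freeP = φ.freeP \ {q} := rfl
@[simp] lemma kmw_qf (ψ : QFK) : (HyperQPTLK.qf ψ).mweight = ψ.weight := rfl
@[simp] lemma kmw_ex (π : ℕ) (φ : HyperQPTLK) :
    (HyperQPTLK.ex π φ).mweight = φ.mweight := rfl
@[simp] lemma kmw_all (π : ℕ) (φ : HyperQPTLK) :
    (HyperQPTLK.all π φ).mweight = φ.mweight := rfl
@[simp] lemma kmw_pex (q : ℕ) (φ : HyperQPTLK) :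
    (HyperQPTLK.pex q φ).mweight = φ.mweight := rfl
@[simp] lemma kmw_pall (q : ℕ) (φ : HyperQPTLK) :
    (HyperQPTLK.pall q φ).mweight = φ.mweight := rfl

lemma sup_fresh (s : Finset ℕ) (k : ℕ) (hk : 1 ≤ k) : s.sup id + k ∉ s := by
  intro h
  have := Finset.le_sup (f := id) h
  simp only [id] at this
  omega

/-- The main elimination lemma. -/
lemma elim : ∀ (n : ℕ) (φ : HyperQPTLK), φ.mweight ≤ n →
    ∃ φ' : HyperQPTL,
      φ'.freeT ⊆ φ.freeT ∧ φ'.freeP ⊆ φ.freeP ∧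
      (φ.freeT = ∅ → φ'.firstTQ = φ.firstTQ) ∧
      ∀ T : Set Trace, T.Nonempty → ∀ Pi σ,
        (HyperQPTLK.Sat T Pi σ 0 φ ↔ HyperQPTL.Sat T Pi σ 0 φ') := by
  intro n
  induction n using Nat.strong_induction_on with
  | _ n IHn =>
    intro φ
    induction φ with
    | qf ψ =>
        intro hn
        rcases h : QFK.repl (ψ.pvars.sup id + 1) ψ with _ | ⟨⟨A, π, b⟩, ψh⟩
        · refine ⟨.qf ψ.eraseK, eraseK_tvars ψ, eraseK_pvars ψ, fun _ => rfl,
            fun T hT Pi σ => ?_⟩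
          exact (eraseK_sat ψ (repl_none ψ _ h) T Pi σ 0).symm
        · obtain ⟨hw, htv, hpv, hkt, hkp, _⟩ :=
            repl_spec ψ (ψ.pvars.sup id + 1) A π b ψh h
          have hπ : π ∈ ψ.tvars := hkt (Finset.mem_insert_self _ _)
          have hbt : b.tvars ⊆ ψ.tvars := fun x hx =>
            hkt (Finset.mem_insert_of_mem hx)
          have hufr : ψ.pvars.sup id + 1 ∉ ψ.pvars := sup_fresh _ _ (by omega)
          have hrfr : ψ.pvars.sup id + 2 ∉ ψ.pvars := sup_fresh _ _ (by omega)
          have hp1fr : ψ.tvars.sup id + 1 ∉ ψ.tvars := sup_fresh _ _ (by omega)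
          have hp2fr : ψ.tvars.sup id + 2 ∉ ψ.tvars := sup_fresh _ _ (by omega)
          set u := ψ.pvars.sup id + 1 with hudef
          set r := ψ.pvars.sup id + 2 with hrdef
          set π₁ := ψ.tvars.sup id + 1 with hp1def
          set π₂ := ψ.tvars.sup id + 2 with hp2def
          have hmw : (stepF u r π₁ π₂ A π b ψh).mweight =
              b.weight + (b.weight + ψh.weight) := by
            simp [stepF, knowC1_weight, knowC2_weight]
          have hnpos : 1 ≤ ψ.weight := by omega
          have hψn : ψ.weight ≤ n := hn
          obtain ⟨φ', hT1, hP1, _, hE1⟩ :=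
            IHn (n - 1) (by omega) (stepF u r π₁ π₂ A π b ψh) (by omega)
          have hstepT : (stepF u r π₁ π₂ A π b ψh).freeT ⊆ ψ.tvars := by
            simp only [stepF, kfreeT_pex, kfreeT_pall, kfreeT_all, kfreeT_ex,
              kfreeT_qf]
            intro x hx
            simp only [Finset.mem_sdiff, Finset.mem_singleton, tvars_and,
              Finset.mem_union] at hx
            obtain ⟨⟨hx1, hx2⟩, hx3⟩ := hx
            rcases hx1 with hh | hh | hh
            · rcases Finset.mem_insert.1 (knowC1_tvars u r π₁ A π b hh) with
                h' | h'
              · exact absurd h' hx3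
              · rcases Finset.mem_insert.1 h' with h'' | h''
                · exact h'' ▸ hπ
                · exact hbt h''
            · rcases Finset.mem_insert.1 (knowC2_tvars u r π₂ A π b hh) with
                h' | h'
              · exact absurd h' hx2
              · rcases Finset.mem_insert.1 h' with h'' | h''
                · exact h'' ▸ hπ
                · exact hbt h''
            · exact htv hh
          have hstepP : (stepF u r π₁ π₂ A π b ψh).freeP ⊆ ψ.pvars := by
            simp only [stepF, kfreeP_pex, kfreeP_pall, kfreeP_all, kfreeP_ex,
              kfreeP_qf]
            intro x hx
            simp only [Finset.mem_sdiff, Finset.mem_singleton, pvars_and,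
              Finset.mem_union] at hx
            obtain ⟨⟨hx1, hx2⟩, hx3⟩ := hx
            rcases hx1 with hh | hh | hh
            · rcases Finset.mem_insert.1 (knowC1_pvars u r π₁ A π b hh) with
                h' | h'
              · exact absurd h' hx3
              · rcases Finset.mem_insert.1 h' with h'' | h''
                · exact absurd h'' hx2
                · exact hkp h''
            · rcases Finset.mem_insert.1 (knowC2_pvars u r π₂ A π b hh) with
                h' | h'
              · exact absurd h' hx3
              · rcases Finset.mem_insert.1 h' with h'' | h''
                · exact absurd h'' hx2
                · exact hkp h''
            · rcases Finset.mem_insert.1 (hpv hh) with h'' | h''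
              · exact absurd h'' hx3
              · exact h''
          refine ⟨φ', hT1.trans hstepT, hP1.trans hstepP, ?_, fun T hT Pi σ => ?_⟩
          · intro hemp
            exact absurd hemp (Finset.ne_empty_of_mem hπ)
          · exact (step_equiv ψ b ψh u r π₁ π₂ A π h hufr hrfr (by omega)
              hp1fr hp2fr (by omega) T hT Pi σ).trans (hE1 T hT Pi σ)
    | ex π φ IH =>
        intro hn
        obtain ⟨φ', h1, h2, h3, h4⟩ := IH hn
        refine ⟨.ex π φ', Finset.sdiff_subset_sdiff h1 (le_refl _), h2,
          fun _ => rfl, fun T hT Pi σ => ?_⟩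
        exact exists_congr fun t => and_congr_right fun ht => h4 T hT _ σ
    | all π φ IH =>
        intro hn
        obtain ⟨φ', h1, h2, h3, h4⟩ := IH hn
        refine ⟨.all π φ', Finset.sdiff_subset_sdiff h1 (le_refl _), h2,
          fun _ => rfl, fun T hT Pi σ => ?_⟩
        exact forall_congr' fun t => imp_congr_right fun ht => h4 T hT _ σ
    | pex q φ IH =>
        intro hn
        obtain ⟨φ', h1, h2, h3, h4⟩ := IH hn
        refine ⟨.pex q φ', h1, Finset.sdiff_subset_sdiff h2 (le_refl _),
          fun hemp => h3 hemp, fun T hT Pi σ => ?_⟩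
        exact exists_congr fun s => h4 T hT Pi _
    | pall q φ IH =>
        intro hn
        obtain ⟨φ', h1, h2, h3, h4⟩ := IH hn
        refine ⟨.pall q φ', h1, Finset.sdiff_subset_sdiff h2 (le_refl _),
          fun hemp => h3 hemp, fun T hT Pi σ => ?_⟩
        exact forall_congr' fun s => h4 T hT Pi _

end Driver

/-- **Elimination of the knowledge operator**: every HyperQPTL_K sentence can
be translated into a HyperQPTL sentence satisfied by exactly the same sets of
traces. -/
theorem hyperQPTLK_to_hyperQPTL :
    ∀ φ : HyperQPTLK, φ.Closed →
      ∃ φ' : HyperQPTL, φ'.Closed ∧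
        ∀ T : Set Trace, (TSatK T φ ↔ TSat T φ') := by
  intro φ hcl
  obtain ⟨hT0, hP0⟩ := hcl
  obtain ⟨φ', h1, h2, h3, h4⟩ := elim φ.mweight φ le_rfl
  refine ⟨φ', ⟨?_, ?_⟩, ?_⟩
  · exact Finset.subset_empty.1 (hT0 ▸ h1)
  · exact Finset.subset_empty.1 (hP0 ▸ h2)
  · intro T
    unfold TSatK TSat
    rcases Set.eq_empty_or_nonempty T with rfl | hT
    · have hq := h3 hT0
      cases hfq : φ.firstTQ with
      | none =>
          have hfq' : φ'.firstTQ = none := by rw [hq, hfq]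
          have hne : ({fun _ => (∅ : Set ℕ)} : Set Trace).Nonempty :=
            ⟨_, rfl⟩
          have step1 := satK_T_irrel φ hfq hT0 ∅ {fun _ => (∅ : Set ℕ)}
            (fun _ _ => (∅ : Set ℕ)) (fun _ => (∅ : Set ℕ)) 0
          have step2 := h4 {fun _ => (∅ : Set ℕ)} hne
            (fun _ _ => (∅ : Set ℕ)) (fun _ => (∅ : Set ℕ))
          have step3 := sat_hq_T_irrel φ' hfq' {fun _ => (∅ : Set ℕ)} ∅
            (fun _ _ => (∅ : Set ℕ)) (fun _ => (∅ : Set ℕ)) 0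
          exact step1.trans (step2.trans step3)
      | some bb =>
          cases bb with
          | true =>
              exact iff_of_true (satK_empty_true φ hfq _ _ _)
                (sat_empty_true φ' (by rw [hq, hfq]) _ _ _)
          | false =>
              exact iff_of_false (satK_empty_false φ hfq _ _ _)
                (sat_empty_false φ' (by rw [hq, hfq]) _ _ _)
    · exact h4 T hT _ _
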